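/- Let a ∈ ℝ, b > 0, and let the family (μ^(k)) be in the uniform Nevai class M^(U)(a,b). Then for every regular summation method S with weights σ_{n,k}, the family (μ^(k)) is in the mean Nevai class M^(S)(Σ_{la,lb}) with Σ_{la,lb} = a^{la} b^{lb} for all la, lb ∈ ℕ, and for every bounded continuous function f : ℝ → ℝ one has lim_{n→∞} Σ_{k=0}^n σ_{n,k} ∫_ℝ f(x) (p_k^(n−k)(x))² dμ^(n−k)(x) = (1/π) ∫_{a−2b}^{a+2b} f(x) / √(4b² − (x−a)²) dx. In particular the limit measure depends only on a and b and not on S. -/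

import Mathlib

open Filter MeasureTheory

namespace Stmt2Aux

/-- ideal whole-line Jacobi coefficients -/
def dd (a b : ℝ) : ℕ → ℤ → ℝ
  | 0, z => if z = 0 then 1 else 0
  | (m+1), z => b * dd a b m (z+1) + a * dd a b m z + b * dd a b m (z-1)

/-- coefficients for the actual Jacobi matrix, centered at k -/
def cc (ca cb : ℕ → ℝ) (k : ℕ) : ℕ → ℕ → ℝ
  | 0, i => if i = k then 1 else 0
  | (m+1), i => cb (i+1) * cc ca cb k m (i+1) + ca i * cc ca cb k m i
      + cb i * cc ca cb k m (i-1)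

lemma dd_symm (a b : ℝ) : ∀ m z, dd a b m (-z) = dd a b m z := by
  intro m
  induction m with
  | zero => intro z; simp [dd, neg_eq_zero]
  | succ m ih =>
      intro z
      have h1 : -z + 1 = -(z - 1) := by ring
      have h2 : -z - 1 = -(z + 1) := by ring
      simp only [dd, h1, h2, ih]
      ring

lemma dd_zero (a b : ℝ) : ∀ (m : ℕ) (z : ℤ), (m : ℤ) < |z| → dd a b m z = 0 := by
  intro m
  induction m with
  | zero => intro z hz; simp only [dd]; rw [if_neg]; intro h; simp [h] at hz
  | succ m ih =>
      intro z hz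
      have hz' : (m : ℤ) + 1 < |z| := by push_cast at hz ⊢; omega
      simp only [dd, ih (z+1) (by rw [lt_abs] at hz' ⊢; omega),
        ih z (by rw [lt_abs] at hz' ⊢; omega),
        ih (z-1) (by rw [lt_abs] at hz' ⊢; omega)]
      ring

lemma dd_bound (a b K : ℝ) (ha : |a| ≤ K) (hb : |b| ≤ K) :
    ∀ m z, |dd a b m z| ≤ (3*K)^m := by
  have hK : 0 ≤ K := le_trans (abs_nonneg a) ha
  intro m
  induction m with
  | zero => intro z; simp only [dd, pow_zero]; split <;> simp
  | succ m ih =>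
      intro z
      calc |dd a b (m+1) z| ≤ |b| * |dd a b m (z+1)| + |a| * |dd a b m z|
            + |b| * |dd a b m (z-1)| := by
              simp only [dd]
              refine le_trans (abs_add_le _ _) ?_
              gcongr
              · exact le_trans (abs_add_le _ _) (by rw [abs_mul, abs_mul])
              · rw [abs_mul]
        _ ≤ K * (3*K)^m + K * (3*K)^m + K * (3*K)^m := by
              gcongr <;> first | exact ih _ | exact ha | exact hb | exact hK
        _ = (3*K)^(m+1) := by ring

lemma cc_bound (ca cb : ℕ → ℝ) (k : ℕ) (K : ℝ) (hca : ∀ i, |ca i| ≤ K)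
    (hcb : ∀ i, |cb i| ≤ K) : ∀ m i, |cc ca cb k m i| ≤ (3*K)^m := by
  have hK : 0 ≤ K := le_trans (abs_nonneg _) (hca 0)
  intro m
  induction m with
  | zero => intro i; simp only [cc, pow_zero]; split <;> simp
  | succ m ih =>
      intro i
      calc |cc ca cb k (m+1) i| ≤ |cb (i+1)| * |cc ca cb k m (i+1)|
            + |ca i| * |cc ca cb k m i| + |cb i| * |cc ca cb k m (i-1)| := by
              simp only [cc]
              refine le_trans (abs_add_le _ _) ?_
              gcongr
              · exact le_trans (abs_add_le _ _) (by rw [abs_mul, abs_mul])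
              · rw [abs_mul]
        _ ≤ K * (3*K)^m + K * (3*K)^m + K * (3*K)^m := by
              gcongr <;> first | exact ih _ | exact hca _ | exact hcb _ | exact hK
        _ = (3*K)^(m+1) := by ring

lemma cc_zero (ca cb : ℕ → ℝ) (k : ℕ) (hcb0 : cb 0 = 0) :
    ∀ m i, (i + m < k ∨ k + m < i) → cc ca cb k m i = 0 := by
  intro m
  induction m with
  | zero => intro i hi; simp only [cc]; rw [if_neg]; omega
  | succ m ih =>
      intro i hi
      rcases Nat.eq_zero_or_pos i with hi0 | hipos
      · subst hi0
        simp only [cc, hcb0, zero_mul, add_zero]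
        rw [ih (0+1) (by omega), ih 0 (by omega)]
        ring
      · simp only [cc]
        rw [ih (i+1) (by omega), ih i (by omega), ih (i-1) (by omega)]
        ring

lemma cc_near_dd (ca cb : ℕ → ℝ) (a b K δ : ℝ) (k : ℕ)
    (hK : 0 ≤ K) (hδ : 0 ≤ δ)
    (ha : |a| ≤ K) (hb : |b| ≤ K) (hca : ∀ i, |ca i| ≤ K) (hcb : ∀ i, |cb i| ≤ K)
    (hcb0 : cb 0 = 0) (m : ℕ) (hkm : m < k)
    (hnear : ∀ i, k - m ≤ i → |ca i - a| ≤ δ ∧ |cb i - b| ≤ δ) :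
    ∀ m' ≤ m, ∀ i : ℕ, |cc ca cb k m' i - dd a b m' ((i : ℤ) - k)| ≤
      δ * m' * (3*(K+1))^m' := by
  intro m'
  induction m' with
  | zero =>
      intro _ i
      simp only [cc, dd, Nat.cast_zero, mul_zero, zero_mul]
      have : (if i = k then (1:ℝ) else 0) = (if ((i:ℤ) - k) = 0 then (1:ℝ) else 0) := by
        by_cases h : i = k
        · rw [if_pos h, if_pos (by omega)]
        · rw [if_neg h, if_neg (by omega)]
      rw [this, sub_self, abs_zero]
  | succ m' ih =>
      intro hm' i
      have hm'' : m' ≤ m := by omega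
      set P : ℝ := (3*(K+1))^m' with hP
      have hPnn : 0 ≤ P := by positivity
      set E : ℝ := δ * m' * P with hE
      have hEnn : 0 ≤ E := by positivity
      have IH := ih hm''
      by_cases hcase : k ≤ i + (m' + 1) ∧ i ≤ k + (m' + 1)
      · obtain ⟨hc1, hc2⟩ := hcase
        have hi1 : 1 ≤ i := by omega
        have hddP : ∀ z, |dd a b m' z| ≤ P := by
          intro z
          refine le_trans (dd_bound a b K ha hb m' z) ?_
          exact pow_le_pow_left₀ (by positivity) (by linarith) m'
        have tri : ∀ (x y C D : ℝ), |x| ≤ K → |x - y| ≤ δ → |C - D| ≤ E → |D| ≤ P →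
            |x * C - y * D| ≤ K * E + δ * P := by
          intro x y C D hx hxy hCD hD
          have h1 : x * C - y * D = x * (C - D) + (x - y) * D := by ring
          rw [h1]
          refine le_trans (abs_add_le _ _) ?_
          rw [abs_mul, abs_mul]
          have := abs_nonneg (C - D); have := abs_nonneg D
          have := abs_nonneg x; have := abs_nonneg (x - y)
          nlinarith
        have hnear1 : |ca i - a| ≤ δ := (hnear i (by omega)).1
        have hnear2 : |cb i - b| ≤ δ := (hnear i (by omega)).2
        have hnear3 : |cb (i+1) - b| ≤ δ := (hnear (i+1) (by omega)).2
        have e1 : ((i + 1 : ℕ) : ℤ) - k = ((i:ℤ) - k) + 1 := by push_cast; ring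
        have e2 : ((i - 1 : ℕ) : ℤ) - k = ((i:ℤ) - k) - 1 := by
          rw [Nat.cast_sub hi1]; push_cast; ring
        have t1 := tri (cb (i+1)) b (cc ca cb k m' (i+1)) (dd a b m' (((i:ℤ) - k) + 1))
          (hcb _) hnear3 (by rw [← e1]; exact IH (i+1)) (hddP _)
        have t2 := tri (ca i) a (cc ca cb k m' i) (dd a b m' ((i:ℤ) - k))
          (hca _) hnear1 (IH i) (hddP _)
        have t3 := tri (cb i) b (cc ca cb k m' (i-1)) (dd a b m' (((i:ℤ) - k) - 1))
          (hcb _) hnear2 (by rw [← e2]; exact IH (i-1)) (hddP _)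
        have split : cc ca cb k (m'+1) i - dd a b (m'+1) ((i:ℤ) - k) =
            (cb (i+1) * cc ca cb k m' (i+1) - b * dd a b m' (((i:ℤ) - k) + 1)) +
            (ca i * cc ca cb k m' i - a * dd a b m' ((i:ℤ) - k)) +
            (cb i * cc ca cb k m' (i-1) - b * dd a b m' (((i:ℤ) - k) - 1)) := by
          simp only [cc, dd]; ring
        rw [split]
        have hfin : K * E + δ * P + (K * E + δ * P) + (K * E + δ * P) ≤
            δ * (m' + 1) * (3*(K+1))^(m'+1) := by
          have hp : (3*(K+1))^(m'+1) = 3*(K+1)*P := by rw [hP, pow_succ]; ring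
          rw [hp, hE]
          nlinarith [mul_nonneg hδ hPnn, mul_nonneg (mul_nonneg hδ hPnn) (Nat.cast_nonneg (α := ℝ) m')]
        have habs := le_trans (abs_add_le _ _)
          (add_le_add (le_trans (abs_add_le _ _) (add_le_add t1 t2)) t3)
        refine le_trans habs (le_trans hfin (le_of_eq (by push_cast; ring)))
      · have h1 : cc ca cb k (m'+1) i = 0 := by
          apply cc_zero ca cb k hcb0; omega
        have h2 : dd a b (m'+1) ((i:ℤ) - k) = 0 := by
          apply dd_zero; rw [lt_abs]; push_cast; omega
        rw [h1, h2, sub_self, abs_zero]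
        positivity

lemma pow_close (K : ℝ) (hK : 0 ≤ K) :
    ∀ (q : ℕ) (x y : ℝ), |x| ≤ K → |y| ≤ K →
      |x^q - y^q| ≤ q * (K+1)^q * |x - y| := by
  intro q
  induction q with
  | zero => intro x y _ _; simp
  | succ q ih =>
      intro x y hx hy
      have h1 : x^(q+1) - y^(q+1) = x^q * (x - y) + y * (x^q - y^q) := by ring
      rw [h1]
      refine le_trans (abs_add_le _ _) ?_
      rw [abs_mul, abs_mul]
      have h2 : |x^q| ≤ (K+1)^q := by
        rw [abs_pow]
        exact pow_le_pow_left₀ (abs_nonneg x) (by linarith) q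
      have h3 := ih x y hx hy
      have h4 : (q:ℝ) * (K+1)^q * |x - y| ≤ (q:ℝ) * (K+1)^(q+1) * |x-y| := by
        have hp : ((K:ℝ)+1)^q ≤ (K+1)^(q+1) := pow_le_pow_right₀ (by linarith) (by omega)
        have h := mul_le_mul_of_nonneg_right hp
          (mul_nonneg (Nat.cast_nonneg q : (0:ℝ) ≤ (q:ℝ)) (abs_nonneg (x-y)))
        calc (q:ℝ) * (K+1)^q * |x-y| = (K+1)^q * ((q:ℝ)*|x-y|) := by ring
          _ ≤ (K+1)^(q+1) * ((q:ℝ)*|x-y|) := h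
          _ = (q:ℝ) * (K+1)^(q+1) * |x-y| := by ring
      have h5 : |x^q| * |x - y| ≤ (K+1)^(q+1) * |x - y| := by
        have : ((K:ℝ)+1)^q ≤ (K+1)^(q+1) :=
          pow_le_pow_right₀ (by linarith) (by omega)
        have := abs_nonneg (x - y)
        nlinarith
      have h6 : |y| * |x^q - y^q| ≤ K * ((q:ℝ) * (K+1)^q * |x - y|) := by
        have := abs_nonneg (x^q - y^q)
        have hq : (0:ℝ) ≤ (q:ℝ) * (K+1)^q * |x - y| := by positivity
        nlinarith
      have h7 : K * ((q:ℝ) * (K+1)^q * |x - y|) ≤ (q:ℝ) * (K+1)^(q+1) * |x - y| := by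
        have hKK : K * (K+1)^q ≤ (K+1)^(q+1) := by
          rw [pow_succ]; nlinarith [pow_nonneg (by linarith : (0:ℝ) ≤ K+1) q]
        have h := mul_le_mul_of_nonneg_right hKK
          (mul_nonneg (Nat.cast_nonneg q : (0:ℝ) ≤ (q:ℝ)) (abs_nonneg (x-y)))
        calc K * ((q:ℝ) * (K+1)^q * |x - y|) = (K * (K+1)^q) * ((q:ℝ) * |x-y|) := by ring
          _ ≤ (K+1)^(q+1) * ((q:ℝ)*|x-y|) := h
          _ = (q:ℝ) * (K+1)^(q+1) * |x - y| := by ring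
      push_cast
      nlinarith [abs_nonneg (x - y)]

/-- regular summation methods are Toeplitz: weighted averages of uniformly
eventually-close-to-L sequences converge to L -/
lemma toeplitz (σ : ℕ → ℕ → ℝ) (hσ0 : ∀ n k, k ≤ n → 0 ≤ σ n k)
    (hσ1 : ∀ n, ∑ k ∈ Finset.range (n+1), σ n k = 1)
    (hσ2 : ∀ k, Tendsto (fun n => σ n k) atTop (nhds 0))
    (g : ℕ → ℕ → ℝ) (L C : ℝ) (hC : ∀ n k, k ≤ n → |g n k - L| ≤ C)
    (hconv : ∀ ε : ℝ, 0 < ε → ∃ N₀, ∀ n k, N₀ ≤ k → k ≤ n → |g n k - L| ≤ ε) :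
    Tendsto (fun n => ∑ k ∈ Finset.range (n+1), σ n k * g n k) atTop (nhds L) := by
  have hC0 : 0 ≤ C := le_trans (abs_nonneg _) (hC 0 0 le_rfl)
  rw [Metric.tendsto_atTop]
  intro ε hε
  obtain ⟨N₀, hN₀⟩ := hconv (ε/4) (by linarith)
  -- the initial part of the weights tends to 0
  have hsmall : Tendsto (fun n => ∑ k ∈ Finset.range N₀, σ n k) atTop (nhds 0) := by
    have := tendsto_finset_sum (Finset.range N₀) (fun k _ => hσ2 k)
    simpa using this
  have hev : ∀ᶠ n in atTop, ∑ k ∈ Finset.range N₀, σ n k < ε / (4*(C+1)) := by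
    have hpos : (0:ℝ) < ε / (4*(C+1)) := by positivity
    exact (hsmall.eventually (eventually_lt_nhds hpos)).mono (fun n h => by simpa using h)
  obtain ⟨N₁, hN₁⟩ := eventually_atTop.1 hev
  refine ⟨max N₀ N₁, fun n hn => ?_⟩
  have hnN₀ : N₀ ≤ n := le_trans (le_max_left _ _) hn
  have hnN₁ : N₁ ≤ n := le_trans (le_max_right _ _) hn
  have key : ∑ k ∈ Finset.range (n+1), σ n k * g n k - L =
      ∑ k ∈ Finset.range (n+1), σ n k * (g n k - L) := by
    simp only [mul_sub]
    rw [Finset.sum_sub_distrib, ← Finset.sum_mul, hσ1, one_mul]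
  rw [Real.dist_eq, key]
  have habs : |∑ k ∈ Finset.range (n+1), σ n k * (g n k - L)| ≤
      ∑ k ∈ Finset.range (n+1), σ n k * |g n k - L| := by
    refine le_trans (Finset.abs_sum_le_sum_abs _ _) ?_
    refine Finset.sum_le_sum (fun k hk => ?_)
    rw [abs_mul, abs_of_nonneg (hσ0 n k (by simp at hk; omega))]
  refine lt_of_le_of_lt habs ?_
  have hsplit : Finset.range (n+1) = Finset.range N₀ ∪ Finset.Ico N₀ (n+1) := by
    simp only [Finset.range_eq_Ico]
    exact (Finset.Ico_union_Ico_eq_Ico (Nat.zero_le _) (by omega)).symm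
  rw [hsplit, Finset.sum_union (by
    simp only [Finset.range_eq_Ico]
    exact Finset.Ico_disjoint_Ico_consecutive 0 N₀ (n+1))]
  have h1 : ∑ k ∈ Finset.range N₀, σ n k * |g n k - L| ≤
      ∑ k ∈ Finset.range N₀, σ n k * C := by
    refine Finset.sum_le_sum (fun k hk => ?_)
    have hk' : k ≤ n := by simp at hk; omega
    exact mul_le_mul_of_nonneg_left (hC n k hk') (hσ0 n k hk')
  have h2 : ∑ k ∈ Finset.range N₀, σ n k * C ≤ (ε / (4*(C+1))) * C := by
    rw [← Finset.sum_mul]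
    exact mul_le_mul_of_nonneg_right (le_of_lt (hN₁ n hnN₁)) hC0
  have h3 : (ε / (4*(C+1))) * C < ε / 2 := by
    rw [div_mul_eq_mul_div, div_lt_iff₀ (by positivity)]
    nlinarith
  have h4 : ∑ k ∈ Finset.Ico N₀ (n+1), σ n k * |g n k - L| ≤
      ∑ k ∈ Finset.Ico N₀ (n+1), σ n k * (ε/4) := by
    refine Finset.sum_le_sum (fun k hk => ?_)
    simp only [Finset.mem_Ico] at hk
    exact mul_le_mul_of_nonneg_left (hN₀ n k hk.1 (by omega)) (hσ0 n k (by omega))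
  have h5 : ∑ k ∈ Finset.Ico N₀ (n+1), σ n k * (ε/4) ≤ ε/4 := by
    rw [← Finset.sum_mul]
    have hsub : ∑ k ∈ Finset.Ico N₀ (n+1), σ n k ≤ 1 := by
      rw [← hσ1 n]
      refine Finset.sum_le_sum_of_subset_of_nonneg ?_ (fun k hk _ => hσ0 n k (by simp at hk; omega))
      rw [Finset.range_eq_Ico]
      exact Finset.Ico_subset_Ico (Nat.zero_le _) le_rfl
    nlinarith
  linarith

/-- test functions: 1 and 2cos(iθ) -/
noncomputable def w : ℕ → ℝ → ℝ := fun i θ => if i = 0 then 1 else 2 * Real.cos (i * θ)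

lemma w_cont (i : ℕ) : Continuous (w i) := by
  unfold w; split
  · exact continuous_const
  · fun_prop

lemma cos_mul_int (c : ℝ) (hc : c ≠ 0) :
    ∫ θ in (0:ℝ)..Real.pi, Real.cos (c*θ) = Real.sin (c*Real.pi)/c := by
  have hderiv : ∀ θ : ℝ, HasDerivAt (fun θ => Real.sin (c*θ)/c) (Real.cos (c*θ)) θ := by
    intro θ
    have h1 : HasDerivAt (fun θ : ℝ => c * θ) c θ := by
      simpa using (hasDerivAt_id θ).const_mul c
    have h2 := (Real.hasDerivAt_sin (c*θ)).comp θ h1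
    have h3 := h2.div_const c
    simpa [mul_comm, mul_div_assoc, mul_div_cancel_left₀ _ hc] using h3
  rw [intervalIntegral.integral_eq_sub_of_hasDerivAt (fun θ _ => hderiv θ)
    ((by fun_prop : Continuous fun θ => Real.cos (c*θ)).intervalIntegrable _ _)]
  simp

lemma w_int (a b : ℝ) : ∀ m (i : ℕ),
    (∫ θ in (0:ℝ)..Real.pi, (a + 2*b*Real.cos θ)^m * w i θ) =
      Real.pi * (if i = 0 then dd a b m 0 else dd a b m (i:ℤ) + dd a b m (-(i:ℤ))) := by
  have hG : ∀ m : ℕ, Continuous fun θ : ℝ => (a + 2*b*Real.cos θ)^m := by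
    intro m; fun_prop
  have hGw : ∀ (m i : ℕ), Continuous fun θ : ℝ => (a + 2*b*Real.cos θ)^m * w i θ := by
    intro m i; exact (hG m).mul (w_cont i)
  intro m
  induction m with
  | zero =>
      intro i
      rcases i with _ | i
      · simp only [pow_zero, one_mul, w, if_pos rfl, dd]
        simp [intervalIntegral.integral_const]
      · have hne : (i + 1 : ℕ) ≠ 0 := by omega
        simp only [pow_zero, one_mul, w, if_neg hne]
        rw [intervalIntegral.integral_const_mul, cos_mul_int _ (by positivity)]
        have : Real.sin ((i+1 : ℕ) * Real.pi) = 0 := Real.sin_nat_mul_pi (i+1)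
        rw [this]
        simp only [dd]
        rw [if_neg (by omega), if_neg (by omega)]
        simp
  | succ m ih =>
      intro i
      set G : ℝ → ℝ := fun θ => a + 2*b*Real.cos θ with hGdef
      have hInt : ∀ (c : ℝ) (j : ℕ),
          IntervalIntegrable (fun θ => c * (G θ ^ m * w j θ)) MeasureTheory.volume 0 Real.pi :=
        fun c j => ((continuous_const.mul (hGw m j)).intervalIntegrable _ _)
      rcases i with _ | i
      · -- i = 0
        have hfull : ∀ θ : ℝ, G θ ^(m+1) * w 0 θ =
            a * (G θ^m * w 0 θ) + b * (G θ^m * w 1 θ) := by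
          intro θ
          simp only [w, if_pos rfl, if_neg (by omega : (1:ℕ) ≠ 0), hGdef]
          push_cast
          rw [one_mul]
          ring
        rw [intervalIntegral.integral_congr (g := fun θ =>
            a * (G θ^m * w 0 θ) + b * (G θ^m * w 1 θ)) (fun θ _ => hfull θ)]
        rw [intervalIntegral.integral_add (hInt a 0) (hInt b 1),
          intervalIntegral.integral_const_mul, intervalIntegral.integral_const_mul,
          ih 0, ih 1]
        simp only [dd]
        norm_num
        ring
      rcases i with _ | i
      · -- i = 1
        have hfull : ∀ θ : ℝ, G θ ^(m+1) * w 1 θ =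
            a * (G θ^m * w 1 θ) + b * (G θ^m * w 2 θ) + (2*b) * (G θ^m * w 0 θ) := by
          intro θ
          simp only [w, if_pos rfl, if_neg (by omega : (1:ℕ) ≠ 0),
            if_neg (by omega : (2:ℕ) ≠ 0), hGdef]
          push_cast
          rw [one_mul, Real.cos_two_mul]
          ring
        rw [intervalIntegral.integral_congr (g := fun θ =>
            a * (G θ^m * w 1 θ) + b * (G θ^m * w 2 θ) + (2*b) * (G θ^m * w 0 θ))
            (fun θ _ => hfull θ)]
        rw [intervalIntegral.integral_add ((hInt a 1).add (hInt b 2)) (hInt (2*b) 0),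
          intervalIntegral.integral_add (hInt a 1) (hInt b 2),
          intervalIntegral.integral_const_mul, intervalIntegral.integral_const_mul,
          intervalIntegral.integral_const_mul, ih 0, ih 1, ih 2]
        simp only [dd]
        norm_num
        ring
      · -- i + 2
        have hfull : ∀ θ : ℝ, G θ ^(m+1) * w (i+2) θ =
            a * (G θ^m * w (i+2) θ) + b * (G θ^m * w (i+3) θ) + b * (G θ^m * w (i+1) θ) := by
          intro θ
          simp only [w, if_neg (by omega : i+2 ≠ 0), if_neg (by omega : i+3 ≠ 0),
            if_neg (by omega : i+1 ≠ 0), hGdef]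
          have h1 : ((i:ℝ)+3) * θ = ((i:ℝ)+2)*θ + θ := by ring
          have h2 : ((i:ℝ)+1) * θ = ((i:ℝ)+2)*θ - θ := by ring
          push_cast
          rw [h1, h2, Real.cos_add, Real.cos_sub]
          ring
        rw [intervalIntegral.integral_congr (g := fun θ =>
            a * (G θ^m * w (i+2) θ) + b * (G θ^m * w (i+3) θ) + b * (G θ^m * w (i+1) θ))
            (fun θ _ => hfull θ)]
        rw [intervalIntegral.integral_add ((hInt a (i+2)).add (hInt b (i+3))) (hInt b (i+1)),
          intervalIntegral.integral_add (hInt a (i+2)) (hInt b (i+3)),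
          intervalIntegral.integral_const_mul, intervalIntegral.integral_const_mul,
          intervalIntegral.integral_const_mul, ih (i+2), ih (i+3), ih (i+1)]
        simp only [if_neg (by omega : i+2 ≠ 0), if_neg (by omega : i+3 ≠ 0),
          if_neg (by omega : i+1 ≠ 0), dd]
        push_cast
        ring_nf

lemma theta_subst (a b : ℝ) (hb : 0 < b) (f : ℝ → ℝ) (hf : Continuous f)
    (C : ℝ) (hC : ∀ x, |f x| ≤ C) :
    (∫ θ in (0:ℝ)..Real.pi, f (a + 2*b*Real.cos θ)) =
      ∫ x in (a - 2*b)..(a + 2*b), f x / Real.sqrt (4*b^2 - (x - a)^2) := by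
  have hC0 : 0 ≤ C := le_trans (abs_nonneg _) (hC 0)
  have hle : a - 2*b ≤ a + 2*b := by linarith
  set s : ℝ → ℝ := fun x => 4*b^2 - (x - a)^2 with hs
  set h : ℝ → ℝ := fun x => f x / Real.sqrt (s x) with hh
  set g₀ : ℝ → ℝ := fun x => (Real.sqrt (s x))⁻¹ with hg₀
  have hscont : Continuous s := by fun_prop
  have hsqcont : Continuous fun x => Real.sqrt (s x) := hscont.sqrt
  have hmeas : Measurable h := hf.measurable.div hsqcont.measurable
  -- derivative of arcsin((x-a)/(2b))
  set G : ℝ → ℝ := fun x => Real.arcsin ((x - a)/(2*b)) with hG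
  have hGcont : Continuous G := Real.continuous_arcsin.comp (by fun_prop)
  have hGderiv : ∀ x ∈ Set.Ioo (a - 2*b) (a + 2*b), HasDerivAt G (g₀ x) x := by
    intro x hx
    set u : ℝ := (x - a)/(2*b) with hu
    have hub : -1 < u ∧ u < 1 := by
      constructor
      · rw [hu, lt_div_iff₀ (by linarith)]
        obtain ⟨h1, _⟩ := hx; linarith
      · rw [hu, div_lt_iff₀ (by linarith)]
        obtain ⟨_, h2⟩ := hx; linarith
    have hinner : HasDerivAt (fun x : ℝ => (x - a)/(2*b)) (1/(2*b)) x := by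
      simpa using ((hasDerivAt_id x).sub_const a).div_const (2*b)
    have houter := Real.hasDerivAt_arcsin (ne_of_gt hub.1) (ne_of_lt hub.2)
    have hcomp := houter.comp x hinner
    have heq : 1 / Real.sqrt (1 - u^2) * (1/(2*b)) = g₀ x := by
      show 1 / Real.sqrt (1 - u^2) * (1/(2*b)) = (Real.sqrt (s x))⁻¹
      have h1 : s x = (1 - u^2) * (2*b)^2 := by
        rw [hs, hu]; field_simp; ring
      have h2 : Real.sqrt (s x) = Real.sqrt (1 - u^2) * (2*b) := by
        rw [h1, Real.sqrt_mul (by nlinarith [hub.1, hub.2] : (0:ℝ) ≤ 1 - u^2),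
          Real.sqrt_sq (by linarith : (0:ℝ) ≤ 2*b)]
      rw [h2, mul_inv, one_div, one_div]
    rw [heq] at hcomp
    exact hcomp
  have hg₀nonneg : ∀ x, 0 ≤ g₀ x := fun x => inv_nonneg.2 (Real.sqrt_nonneg _)
  have hg₀int : IntegrableOn g₀ (Set.Ioc (a - 2*b) (a + 2*b)) :=
    intervalIntegral.integrableOn_deriv_of_nonneg (hGcont.continuousOn) hGderiv
      (fun x _ => hg₀nonneg x)
  have hhint : IntegrableOn h (Set.Ioc (a - 2*b) (a + 2*b)) := by
    refine Integrable.mono' (hg₀int.const_mul C) hmeas.aestronglyMeasurable ?_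
    refine Filter.Eventually.of_forall (fun x => ?_)
    have : ‖h x‖ = |f x| * g₀ x := by
      rw [Real.norm_eq_abs]
      show |f x / Real.sqrt (s x)| = |f x| * (Real.sqrt (s x))⁻¹
      rw [div_eq_mul_inv, abs_mul, abs_of_nonneg (inv_nonneg.2 (Real.sqrt_nonneg _))]
    rw [this]
    exact mul_le_mul_of_nonneg_right (hC x) (hg₀nonneg x)
  have hhII : IntervalIntegrable h MeasureTheory.volume (a - 2*b) (a + 2*b) := by
    rw [intervalIntegrable_iff, Set.uIoc_of_le hle]
    exact hhint
  -- the change of variables map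
  set φ : ℝ → ℝ := fun θ => a - 2*b*Real.cos θ with hφ
  have hφcont : Continuous φ := by fun_prop
  have hφd : ∀ θ : ℝ, HasDerivAt φ (2*b*Real.sin θ) θ := by
    intro θ
    have h := ((Real.hasDerivAt_cos θ).const_mul (2*b)).const_sub a
    rw [show 2*b*Real.sin θ = -(2*b*-Real.sin θ) by ring]
    exact h
  have hφ0 : φ 0 = a - 2*b := by simp [hφ]
  have hφπ : φ Real.pi = a + 2*b := by simp [hφ, Real.cos_pi]
  have hφmem : ∀ θ, φ θ ∈ Set.Icc (a - 2*b) (a + 2*b) := by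
    intro θ
    constructor
    · have := Real.cos_le_one θ; simp only [hφ]; nlinarith
    · have := Real.neg_one_le_cos θ; simp only [hφ]; nlinarith
  have hπ : (0:ℝ) < Real.pi := Real.pi_pos
  -- key identity for small δ
  have hEδ : ∀ δ : ℝ, δ ∈ Set.Ioo (0:ℝ) (Real.pi/2) →
      (∫ x in (φ δ)..(φ (Real.pi - δ)), h x) =
        ∫ θ in δ..(Real.pi - δ), f (φ θ) := by
    intro δ hδ
    obtain ⟨hδ0, hδπ⟩ := hδ
    have hδle : δ ≤ Real.pi - δ := by linarith
    have himage : φ '' (Set.uIcc δ (Real.pi - δ)) ⊆ Set.Ioo (a - 2*b) (a + 2*b) := by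
      rintro x ⟨θ, hθ, rfl⟩
      rw [Set.uIcc_of_le hδle] at hθ
      obtain ⟨hθ1, hθ2⟩ := hθ
      have hθpos : 0 < θ := lt_of_lt_of_le hδ0 hθ1
      have hθltπ : θ < Real.pi := by linarith
      have hcos1 : Real.cos θ < 1 := by
        have := Real.strictAntiOn_cos (Set.mem_Icc.2 ⟨le_rfl, hπ.le⟩)
          (Set.mem_Icc.2 ⟨hθpos.le, hθltπ.le⟩) hθpos
        simpa [Real.cos_zero] using this
      have hcos2 : -1 < Real.cos θ := by
        have := Real.strictAntiOn_cos (Set.mem_Icc.2 ⟨hθpos.le, hθltπ.le⟩)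
          (Set.mem_Icc.2 ⟨hπ.le, le_rfl⟩) hθltπ
        simpa [Real.cos_pi] using this
      constructor
      · simp only [hφ]; nlinarith
      · simp only [hφ]; nlinarith
    have hhcontIoo : ContinuousOn h (Set.Ioo (a - 2*b) (a + 2*b)) := by
      refine ContinuousOn.div hf.continuousOn hsqcont.continuousOn ?_
      intro x hx
      refine ne_of_gt (Real.sqrt_pos.2 ?_)
      obtain ⟨h1, h2⟩ := hx
      simp only [hs]; nlinarith
    have hsub := intervalIntegral.integral_comp_smul_deriv'
      (f := φ) (f' := fun θ => 2*b*Real.sin θ) (g := h)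
      (fun θ _ => hφd θ) (by fun_prop : Continuous fun θ : ℝ => 2*b*Real.sin θ).continuousOn
      (hhcontIoo.mono himage)
    rw [← hsub]
    refine intervalIntegral.integral_congr (fun θ hθ => ?_)
    rw [Set.uIcc_of_le hδle] at hθ
    obtain ⟨hθ1, hθ2⟩ := hθ
    have hθpos : 0 < θ := lt_of_lt_of_le hδ0 hθ1
    have hθltπ : θ < Real.pi := by linarith
    have hsin : 0 < Real.sin θ := Real.sin_pos_of_pos_of_lt_pi hθpos hθltπ
    have hss : s (φ θ) = (2*b*Real.sin θ)^2 := by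
      simp only [hs, hφ]
      linear_combination (-(4*b^2)) * (Real.sin_sq_add_cos_sq θ)
    have h2bs : 0 < 2*b*Real.sin θ := by positivity
    simp only [hh, Function.comp_apply, hss, smul_eq_mul]
    rw [Real.sqrt_sq h2bs.le, mul_div_cancel₀ _ (ne_of_gt h2bs)]
  -- take the limit δ → 0⁺
  set Φ : ℝ → ℝ := fun t => ∫ x in (a - 2*b)..t, h x with hΦ
  have hΦcont : ContinuousOn Φ (Set.Icc (a - 2*b) (a + 2*b)) := by
    have := intervalIntegral.continuousOn_primitive_interval'
      (f := h) (μ := MeasureTheory.volume) hhII Set.left_mem_uIcc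
    rwa [Set.uIcc_of_le hle] at this
  set fφ : ℝ → ℝ := fun θ => f (φ θ) with hfφ
  have hfφcont : Continuous fφ := hf.comp hφcont
  set Ψ : ℝ → ℝ := fun t => ∫ θ in (0:ℝ)..t, fφ θ with hΨ
  have hΨcont : Continuous Ψ :=
    intervalIntegral.continuous_primitive (fun u v => (hfφcont.intervalIntegrable u v)) 0
  set l : Filter ℝ := nhdsWithin 0 (Set.Ioi 0) with hl
  have hIoomem : Set.Ioo (0:ℝ) (Real.pi/2) ∈ l :=
    Ioo_mem_nhdsGT_of_mem (by constructor <;> [exact le_rfl; positivity])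
  -- LHS tendsto
  have hT1 : Tendsto (fun δ : ℝ => φ δ) l (nhds (a - 2*b)) := by
    rw [← hφ0]
    exact (hφcont.tendsto 0).mono_left nhdsWithin_le_nhds
  have hT2 : Tendsto (fun δ : ℝ => φ (Real.pi - δ)) l (nhds (a + 2*b)) := by
    rw [← hφπ]
    have : Tendsto (fun δ : ℝ => Real.pi - δ) l (nhds Real.pi) := by
      have h0 := Continuous.tendsto (f := fun δ : ℝ => Real.pi - δ) (by fun_prop) 0
      simpa using h0.mono_left nhdsWithin_le_nhds
    exact (hφcont.tendsto Real.pi).comp this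
  have hΦT1 : Tendsto (fun δ : ℝ => Φ (φ δ)) l (nhds (Φ (a - 2*b))) := by
    refine (hΦcont (a - 2*b) (Set.mem_Icc.2 ⟨le_rfl, hle⟩)).tendsto.comp ?_
    exact tendsto_nhdsWithin_of_tendsto_nhds_of_eventually_within _ hT1
      (Filter.Eventually.of_forall (fun δ => hφmem δ))
  have hΦT2 : Tendsto (fun δ : ℝ => Φ (φ (Real.pi - δ))) l (nhds (Φ (a + 2*b))) := by
    refine (hΦcont (a + 2*b) (Set.mem_Icc.2 ⟨hle, le_rfl⟩)).tendsto.comp ?_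
    exact tendsto_nhdsWithin_of_tendsto_nhds_of_eventually_within _ hT2
      (Filter.Eventually.of_forall (fun δ => hφmem _))
  have hLHS : Tendsto (fun δ : ℝ => ∫ x in (φ δ)..(φ (Real.pi - δ)), h x) l
      (nhds (∫ x in (a - 2*b)..(a + 2*b), h x)) := by
    have hdecomp : ∀ᶠ δ in l, (∫ x in (φ δ)..(φ (Real.pi - δ)), h x)
        = Φ (φ (Real.pi - δ)) - Φ (φ δ) := by
      refine Filter.Eventually.of_forall (fun δ => ?_)
      rw [hΦ]
      rw [← intervalIntegral.integral_interval_sub_left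
        (hhII.mono_set (Set.uIcc_subset_uIcc (Set.left_mem_uIcc)
          (Set.Icc_subset_uIcc (hφmem _))))
        (hhII.mono_set (Set.uIcc_subset_uIcc (Set.left_mem_uIcc)
          (Set.Icc_subset_uIcc (hφmem _))))]
    refine Tendsto.congr' (hdecomp.mono (fun δ hx => hx.symm)) ?_
    have := hΦT2.sub hΦT1
    have hΦ0 : Φ (a - 2*b) = 0 := intervalIntegral.integral_same
    rw [hΦ0, sub_zero] at this
    exact this
  -- RHS tendsto
  have hRHS : Tendsto (fun δ : ℝ => ∫ θ in δ..(Real.pi - δ), fφ θ) l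
      (nhds (∫ θ in (0:ℝ)..Real.pi, fφ θ)) := by
    have hdecomp : ∀ δ : ℝ, (∫ θ in δ..(Real.pi - δ), fφ θ) = Ψ (Real.pi - δ) - Ψ δ := by
      intro δ
      rw [hΨ, ← intervalIntegral.integral_interval_sub_left
        (hfφcont.intervalIntegrable _ _) (hfφcont.intervalIntegrable _ _)]
    simp only [hdecomp]
    have h1 : Tendsto (fun δ : ℝ => Ψ (Real.pi - δ)) l (nhds (Ψ Real.pi)) := by
      refine (hΨcont.tendsto Real.pi).comp ?_
      have h0 := Continuous.tendsto (f := fun δ : ℝ => Real.pi - δ) (by fun_prop) 0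
      simpa using h0.mono_left nhdsWithin_le_nhds
    have h2 : Tendsto (fun δ : ℝ => Ψ δ) l (nhds (Ψ 0)) :=
      (hΨcont.tendsto 0).mono_left nhdsWithin_le_nhds
    have hΨ0 : Ψ 0 = 0 := intervalIntegral.integral_same
    have := h1.sub h2
    rw [hΨ0, sub_zero] at this
    exact this
  have heq : (∫ x in (a - 2*b)..(a + 2*b), h x) = ∫ θ in (0:ℝ)..Real.pi, fφ θ := by
    refine tendsto_nhds_unique (Tendsto.congr' ?_ hLHS) hRHS
    refine Filter.eventually_of_mem hIoomem (fun δ hδ => ?_)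
    exact hEδ δ hδ
  -- flip the cosine
  have hflip : (∫ θ in (0:ℝ)..Real.pi, f (a + 2*b*Real.cos θ)) =
      ∫ θ in (0:ℝ)..Real.pi, fφ θ := by
    have h1 : ∀ θ : ℝ, f (a + 2*b*Real.cos θ) = fφ (Real.pi - θ) := by
      intro θ
      simp only [hfφ, hφ, Real.cos_pi_sub]
      ring_nf
    rw [intervalIntegral.integral_congr (g := fun θ => fφ (Real.pi - θ))
      (fun θ _ => h1 θ)]
    rw [intervalIntegral.integral_comp_sub_left fφ Real.pi]
    norm_num
  rw [hflip, heq]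

end Stmt2Aux
open Stmt2Aux in
theorem stmt2
    (μ : ℕ → MeasureTheory.Measure ℝ)
    (hfin : ∀ k, MeasureTheory.IsFiniteMeasure (μ k))
    (hsupp : ∃ R : ℝ, ∀ k, μ k ((Set.Icc (-R) R)ᶜ) = 0)
    (p : ℕ → ℕ → Polynomial ℝ) (ca cb : ℕ → ℕ → ℝ)
    (hdeg : ∀ k l, (p k l).natDegree = l)
    (hlead : ∀ k l, 0 < (p k l).leadingCoeff)
    (horth : ∀ k l m, (∫ x, (p k l).eval x * (p k m).eval x ∂ (μ k)) = if l = m then 1 else 0)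
    (hb0 : ∀ k, cb k 0 = 0)
    (hbpos : ∀ k l, 0 < cb k (l+1))
    (hrec : ∀ k l, Polynomial.X * p k l =
      Polynomial.C (cb k (l+1)) * p k (l+1) + Polynomial.C (ca k l) * p k l +
      Polynomial.C (cb k l) * p k (l-1))
    (σ : ℕ → ℕ → ℝ)
    (hσ0 : ∀ n k, k ≤ n → 0 ≤ σ n k)
    (hσ1 : ∀ n, ∑ k ∈ Finset.range (n+1), σ n k = 1)
    (hσ2 : ∀ k, Filter.Tendsto (fun n => σ n k) Filter.atTop (nhds 0))
    (a₀ b₀ : ℝ) (hb₀ : 0 < b₀)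
    (hUa : ∀ ε : ℝ, 0 < ε → ∃ N₀ : ℕ, ∀ n, N₀ ≤ n → ∀ k, |ca k n - a₀| ≤ ε)
    (hUb : ∀ ε : ℝ, 0 < ε → ∃ N₀ : ℕ, ∀ n, N₀ ≤ n → ∀ k, |cb k n - b₀| ≤ ε)
    :
    ((∃ A : ℝ, ∀ k n, |ca k n| ≤ A) ∧ (∃ B : ℝ, ∀ k n, cb k n ≤ B) ∧
      (∀ l : ℕ, 1 ≤ l → Filter.Tendsto
        (fun n => ∑ k ∈ Finset.range (n+1), σ n k * |ca (n-k) (k+l) - ca (n-k) k|)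
        Filter.atTop (nhds 0)) ∧
      (∀ l : ℕ, 1 ≤ l → Filter.Tendsto
        (fun n => ∑ k ∈ Finset.range (n+1), σ n k * |cb (n-k) (k+l) - cb (n-k) k|)
        Filter.atTop (nhds 0)) ∧
      (∀ la lb : ℕ, Filter.Tendsto
        (fun n => ∑ k ∈ Finset.range (n+1), σ n k * (ca (n-k) k)^la * (cb (n-k) k)^lb)
        Filter.atTop (nhds (a₀^la * b₀^lb)))) ∧
    (∀ f : ℝ → ℝ, Continuous f → (∃ C : ℝ, ∀ x, |f x| ≤ C) →
      Filter.Tendsto (fun n => ∑ k ∈ Finset.range (n+1),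
          σ n k * ∫ x, f x * ((p (n-k) k).eval x)^2 ∂ (μ (n-k)))
          Filter.atTop
        (nhds ((1 / Real.pi) * ∫ x in (a₀ - 2*b₀)..(a₀ + 2*b₀),
          f x / Real.sqrt (4*b₀^2 - (x - a₀)^2)))) := by
  obtain ⟨R, hR⟩ := hsupp
  have hIcc : Set.Icc (-R) R ⊆ Set.Icc (-(max R 0)) (max R 0) :=
    Set.Icc_subset_Icc (neg_le_neg (le_max_left R 0)) (le_max_left R 0)
  set K : ℝ := max (max R 0) (|a₀| + 2*b₀) with hKdef
  have hK0 : 0 ≤ K := le_trans (le_max_right R 0) (le_max_left _ _)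
  have hRK : max R 0 ≤ K := le_max_left _ _
  have haK : |a₀| ≤ K := le_trans (by linarith [abs_nonneg a₀] : |a₀| ≤ |a₀| + 2*b₀)
    (le_max_right _ _)
  have hbK : |b₀| ≤ K := by
    rw [abs_of_pos hb₀]
    exact le_trans (by linarith [abs_nonneg a₀] : b₀ ≤ |a₀| + 2*b₀) (le_max_right _ _)
  -- a.e. facts
  have hae : ∀ j, ∀ᵐ x ∂(μ j), x ∈ Set.Icc (-R) R := by
    intro j
    rw [MeasureTheory.ae_iff]
    convert hR j using 2
    rfl
  have haeK : ∀ j, ∀ᵐ x ∂(μ j), |x| ≤ K := by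
    intro j
    refine (hae j).mono (fun x hx => ?_)
    have h1 : |x| ≤ max R 0 := by
      rw [abs_le]
      constructor
      · exact le_trans (neg_le_neg (le_max_left R 0)) hx.1
      · exact le_trans hx.2 (le_max_left R 0)
    exact le_trans h1 hRK
  -- integrability of a.e.-bounded measurable functions
  have hintb : ∀ (j : ℕ) (g : ℝ → ℝ), MeasureTheory.AEStronglyMeasurable g (μ j) →
      ∀ Cg : ℝ, (∀ x ∈ Set.Icc (-R) R, |g x| ≤ Cg) → MeasureTheory.Integrable g (μ j) := by
    intro j g hg Cg hCg
    haveI := hfin j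
    refine MeasureTheory.Integrable.mono' (MeasureTheory.integrable_const Cg) hg ?_
    exact (hae j).mono (fun x hx => by rw [Real.norm_eq_abs]; exact hCg x hx)
  have hpolyint : ∀ (j : ℕ) (q : Polynomial ℝ),
      MeasureTheory.Integrable (fun x => q.eval x) (μ j) := by
    intro j q
    obtain ⟨Cg, hCg⟩ := (isCompact_Icc : IsCompact (Set.Icc (-R) R)).exists_bound_of_continuousOn
      q.continuous.continuousOn
    exact hintb j _ q.continuous.measurable.aestronglyMeasurable Cg
      (fun x hx => by simpa using hCg x hx)
  have hintm : ∀ (j m i i' : ℕ),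
      MeasureTheory.Integrable (fun x => x^m * ((p j i).eval x * (p j i').eval x)) (μ j) := by
    intro j m i i'
    have := hpolyint j (Polynomial.X^m * (p j i * p j i'))
    simpa [Polynomial.eval_mul, Polynomial.eval_pow, Polynomial.eval_X] using this
  have hone : ∀ (j k : ℕ), (∫ x, ((p j k).eval x)^2 ∂(μ j)) = 1 := by
    intro j k
    have := horth j k k
    rw [if_pos rfl] at this
    calc (∫ x, ((p j k).eval x)^2 ∂(μ j)) = ∫ x, (p j k).eval x * (p j k).eval x ∂(μ j) := by
          congr 1; ext x; ring
      _ = 1 := this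
  -- the moment identity
  have hmom : ∀ (j k m i : ℕ),
      (∫ x, x^m * ((p j i).eval x * (p j k).eval x) ∂(μ j)) = cc (ca j) (cb j) k m i := by
    intro j k m
    induction m with
    | zero =>
        intro i
        simp only [pow_zero, one_mul]
        rw [horth j i k]
        simp [Stmt2Aux.cc]
    | succ m ih =>
        intro i
        have hrec' : ∀ x : ℝ, x * (p j i).eval x =
            cb j (i+1) * (p j (i+1)).eval x + ca j i * (p j i).eval x
              + cb j i * (p j (i-1)).eval x := by
          intro x
          have := congrArg (Polynomial.eval x) (hrec j i)
          simpa [Polynomial.eval_mul, Polynomial.eval_add, Polynomial.eval_C,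
            Polynomial.eval_X] using this
        have hptws : ∀ x : ℝ, x^(m+1) * ((p j i).eval x * (p j k).eval x)
            = cb j (i+1) * (x^m * ((p j (i+1)).eval x * (p j k).eval x))
              + ca j i * (x^m * ((p j i).eval x * (p j k).eval x))
              + cb j i * (x^m * ((p j (i-1)).eval x * (p j k).eval x)) := by
          intro x
          calc x^(m+1) * ((p j i).eval x * (p j k).eval x)
              = x^m * ((x * (p j i).eval x) * (p j k).eval x) := by ring
            _ = _ := by rw [hrec' x]; ring
        rw [MeasureTheory.integral_congr_ae (Filter.Eventually.of_forall hptws)]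
        have I1 : MeasureTheory.Integrable
            (fun x => cb j (i+1) * (x^m * ((p j (i+1)).eval x * (p j k).eval x))) (μ j) :=
          (hintm j m (i+1) k).const_mul _
        have I2 : MeasureTheory.Integrable
            (fun x => ca j i * (x^m * ((p j i).eval x * (p j k).eval x))) (μ j) :=
          (hintm j m i k).const_mul _
        have I3 : MeasureTheory.Integrable
            (fun x => cb j i * (x^m * ((p j (i-1)).eval x * (p j k).eval x))) (μ j) :=
          (hintm j m (i-1) k).const_mul _
        have I12 : MeasureTheory.Integrable
            (fun x => cb j (i+1) * (x^m * ((p j (i+1)).eval x * (p j k).eval x))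
              + ca j i * (x^m * ((p j i).eval x * (p j k).eval x))) (μ j) := I1.add I2
        rw [MeasureTheory.integral_add I12 I3, MeasureTheory.integral_add I1 I2,
          MeasureTheory.integral_const_mul, MeasureTheory.integral_const_mul,
          MeasureTheory.integral_const_mul, ih (i+1), ih i, ih (i-1)]
        rfl
  have hdiag : ∀ (j k m : ℕ),
      (∫ x, x^m * ((p j k).eval x)^2 ∂(μ j)) = cc (ca j) (cb j) k m k := by
    intro j k m
    rw [← hmom j k m k]
    congr 1; ext x; ring
  -- bounds on the recurrence coefficients
  have hcbnn : ∀ j l, 0 ≤ cb j l := by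
    intro j l
    cases l with
    | zero => rw [hb0 j]
    | succ l => exact (hbpos j l).le
  -- |ca| ≤ K
  have hcaK : ∀ j l, |ca j l| ≤ K := by
    intro j l
    have hccl : cc (ca j) (cb j) l 1 l = ca j l := by
      rcases Nat.eq_zero_or_pos l with rfl | hl
      · simp [Stmt2Aux.cc, hb0 j]
      · simp [Stmt2Aux.cc, show l+1 ≠ l by omega, show l - 1 ≠ l by omega]
    rw [← hccl, ← hmom j l 1 l]
    have h1 : |∫ x, x^1 * ((p j l).eval x * (p j l).eval x) ∂(μ j)|
        ≤ ∫ x, |x^1 * ((p j l).eval x * (p j l).eval x)| ∂(μ j) := by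
      have h := MeasureTheory.norm_integral_le_integral_norm
        (μ := μ j) (f := fun x => x^1 * ((p j l).eval x * (p j l).eval x))
      simp only [Real.norm_eq_abs] at h
      exact h
    refine le_trans h1 ?_
    have h2 : (∫ x, |x^1 * ((p j l).eval x * (p j l).eval x)| ∂(μ j))
        ≤ ∫ x, K * ((p j l).eval x * (p j l).eval x) ∂(μ j) := by
      refine MeasureTheory.integral_mono_ae ((hintm j 1 l l).abs)
        ((hintm j 0 l l).const_mul K |>.congr' ?_ ?_) ?_
      · exact ((continuous_const.mul ((p j l).continuous.mul
          (p j l).continuous)).measurable.aestronglyMeasurable)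
      · exact Filter.Eventually.of_forall (fun x => by simp)
      · refine (haeK j).mono (fun x hx => ?_)
        have hnn : 0 ≤ (p j l).eval x * (p j l).eval x := mul_self_nonneg _
        show |x^1 * ((p j l).eval x * (p j l).eval x)| ≤ K * ((p j l).eval x * (p j l).eval x)
        rw [pow_one, abs_mul, abs_of_nonneg hnn]
        exact mul_le_mul_of_nonneg_right hx hnn
    refine le_trans h2 ?_
    rw [MeasureTheory.integral_const_mul, horth j l l, if_pos rfl, mul_one]
  -- cb ≤ K
  have hcc2 : ∀ j l, cc (ca j) (cb j) l 2 l
      = (cb j (l+1))^2 + (ca j l)^2 + (cb j l)^2 := by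
    intro j l
    rcases Nat.eq_zero_or_pos l with rfl | hl
    · simp [Stmt2Aux.cc, hb0 j]
      ring
    · have e1 : l - 1 + 1 = l := Nat.sub_add_cancel hl
      simp [Stmt2Aux.cc, e1, show l+1+1 ≠ l by omega, show l+1 ≠ l by omega,
        show l - 1 ≠ l by omega, show l-1-1 ≠ l by omega]
      ring
  have hcbK : ∀ j l, cb j l ≤ K := by
    intro j l
    cases l with
    | zero => rw [hb0 j]; exact hK0
    | succ l =>
        have hint2 : (∫ x, x^2 * ((p j l).eval x * (p j l).eval x) ∂(μ j))
            = cc (ca j) (cb j) l 2 l := hmom j l 2 l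
        have hb2 : (∫ x, x^2 * ((p j l).eval x * (p j l).eval x) ∂(μ j))
            ≤ ∫ x, K^2 * (x^0 * ((p j l).eval x * (p j l).eval x)) ∂(μ j) := by
          refine MeasureTheory.integral_mono_ae (hintm j 2 l l)
            ((hintm j 0 l l).const_mul (K^2)) ?_
          refine (haeK j).mono (fun x hx => ?_)
          have hnn : 0 ≤ (p j l).eval x * (p j l).eval x := mul_self_nonneg _
          have hx2 : x^2 ≤ K^2 := by
            rw [← sq_abs]
            exact pow_le_pow_left₀ (abs_nonneg x) hx 2
          show x^2 * ((p j l).eval x * (p j l).eval x)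
            ≤ K^2 * (x^0 * ((p j l).eval x * (p j l).eval x))
          rw [pow_zero, one_mul]
          exact mul_le_mul_of_nonneg_right hx2 hnn
        have hval : (∫ x, K^2 * (x^0 * ((p j l).eval x * (p j l).eval x)) ∂(μ j)) = K^2 := by
          rw [MeasureTheory.integral_const_mul, hmom j l 0 l]
          simp [Stmt2Aux.cc]
        rw [hval] at hb2
        rw [hint2, hcc2 j l] at hb2
        nlinarith [hcbnn j (l+1), sq_nonneg (ca j l), sq_nonneg (cb j l), hK0]
  have hcbKabs : ∀ j l, |cb j l| ≤ K := by
    intro j l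
    rw [abs_of_nonneg (hcbnn j l)]
    exact hcbK j l
  have habs2 : ∀ (M x y : ℝ), |x| ≤ M → |y| ≤ M → |x - y| ≤ 2*M := by
    intro M x y hx hy
    rw [sub_eq_add_neg]
    refine le_trans (abs_add_le _ _) ?_
    rw [abs_neg]; linarith
  refine ⟨⟨⟨K, fun k n => hcaK k n⟩, ⟨K, fun k n => hcbK k n⟩, ?_, ?_, ?_⟩, ?_⟩
  · -- mean variation of ca
    intro l hl
    refine toeplitz σ hσ0 hσ1 hσ2 (fun n k => |ca (n-k) (k+l) - ca (n-k) k|) 0 (2*K)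
      (fun n k hkn => ?_) (fun ε hε => ?_)
    · rw [sub_zero, abs_abs]
      exact habs2 K _ _ (hcaK _ _) (hcaK _ _)
    · obtain ⟨N, hN⟩ := hUa (ε/2) (by linarith)
      refine ⟨N, fun n k hk hkn => ?_⟩
      rw [sub_zero, abs_abs]
      have h1 := hN (k+l) (by omega) (n-k)
      have h2 := hN k hk (n-k)
      have h3 := abs_sub_le (ca (n-k) (k+l)) a₀ (ca (n-k) k)
      rw [abs_sub_comm a₀ (ca (n-k) k)] at h3
      linarith
  · -- mean variation of cb
    intro l hl
    refine toeplitz σ hσ0 hσ1 hσ2 (fun n k => |cb (n-k) (k+l) - cb (n-k) k|) 0 (2*K)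
      (fun n k hkn => ?_) (fun ε hε => ?_)
    · rw [sub_zero, abs_abs]
      exact habs2 K _ _ (hcbKabs _ _) (hcbKabs _ _)
    · obtain ⟨N, hN⟩ := hUb (ε/2) (by linarith)
      refine ⟨N, fun n k hk hkn => ?_⟩
      rw [sub_zero, abs_abs]
      have h1 := hN (k+l) (by omega) (n-k)
      have h2 := hN k hk (n-k)
      have h3 := abs_sub_le (cb (n-k) (k+l)) b₀ (cb (n-k) k)
      rw [abs_sub_comm b₀ (cb (n-k) k)] at h3
      linarith
  · -- moments of coefficients
    intro la lb
    have hfeq : (fun n => ∑ k ∈ Finset.range (n+1), σ n k * (ca (n-k) k)^la * (cb (n-k) k)^lb)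
        = fun n => ∑ k ∈ Finset.range (n+1), σ n k * ((ca (n-k) k)^la * (cb (n-k) k)^lb) := by
      funext n
      exact Finset.sum_congr rfl (fun k _ => by ring)
    rw [hfeq]
    have hprodbd : ∀ x y : ℝ, |x| ≤ K → |y| ≤ K → |x^la * y^lb| ≤ (K+1)^(la+lb) := by
      intro x y hx hy
      rw [abs_mul, abs_pow, abs_pow, pow_add]
      exact mul_le_mul (pow_le_pow_left₀ (abs_nonneg x) (by linarith) la)
        (pow_le_pow_left₀ (abs_nonneg y) (by linarith) lb) (by positivity) (by positivity)
    refine toeplitz σ hσ0 hσ1 hσ2 (fun n k => (ca (n-k) k)^la * (cb (n-k) k)^lb)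
      (a₀^la * b₀^lb) (2*(K+1)^(la+lb)) (fun n k hkn => ?_) (fun ε hε => ?_)
    · exact habs2 ((K+1)^(la+lb)) _ _
        (hprodbd _ _ (hcaK _ _) (hcbKabs _ _)) (hprodbd _ _ haK hbK)
    · set Cm : ℝ := ((la:ℝ) + lb) * (K+1)^(la+lb) + 1 with hCm
      have hCmpos : 0 < Cm := by positivity
      set δ : ℝ := ε / Cm with hδ
      have hδpos : 0 < δ := by positivity
      obtain ⟨Na, hNa⟩ := hUa δ hδpos
      obtain ⟨Nb, hNb⟩ := hUb δ hδpos
      refine ⟨max Na Nb, fun n k hk hkn => ?_⟩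
      have hxa : |ca (n-k) k - a₀| ≤ δ := hNa k (le_trans (le_max_left _ _) hk) (n-k)
      have hyb : |cb (n-k) k - b₀| ≤ δ := hNb k (le_trans (le_max_right _ _) hk) (n-k)
      set x : ℝ := ca (n-k) k
      set y : ℝ := cb (n-k) k
      have hx : |x| ≤ K := hcaK _ _
      have hy : |y| ≤ K := hcbKabs _ _
      have t1 : |x^la - a₀^la| ≤ (la:ℝ) * (K+1)^la * δ :=
        le_trans (pow_close K hK0 la x a₀ hx haK)
          (mul_le_mul_of_nonneg_left hxa (by positivity))
      have t2 : |y^lb - b₀^lb| ≤ (lb:ℝ) * (K+1)^lb * δ :=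
        le_trans (pow_close K hK0 lb y b₀ hy hbK)
          (mul_le_mul_of_nonneg_left hyb (by positivity))
      have hsplit : x^la * y^lb - a₀^la * b₀^lb
          = x^la * (y^lb - b₀^lb) + (x^la - a₀^la) * b₀^lb := by ring
      have hxla : |x^la| ≤ (K+1)^la := by
        rw [abs_pow]
        exact pow_le_pow_left₀ (abs_nonneg x) (by linarith) la
      have hblb : |b₀^lb| ≤ (K+1)^lb := by
        rw [abs_pow]
        exact pow_le_pow_left₀ (abs_nonneg b₀) (by linarith) lb
      calc |x^la * y^lb - a₀^la * b₀^lb|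
          ≤ |x^la| * |y^lb - b₀^lb| + |x^la - a₀^la| * |b₀^lb| := by
            rw [hsplit]
            refine le_trans (abs_add_le _ _) ?_
            rw [abs_mul, abs_mul]
        _ ≤ (K+1)^la * ((lb:ℝ) * (K+1)^lb * δ) + ((la:ℝ) * (K+1)^la * δ) * (K+1)^lb := by
            refine add_le_add (mul_le_mul hxla t2 (abs_nonneg _) (by positivity))
              (mul_le_mul t1 hblb (abs_nonneg _) (by positivity))
        _ = (((la:ℝ) + lb) * (K+1)^(la+lb)) * δ := by rw [pow_add]; ring
        _ ≤ Cm * δ := by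
            refine mul_le_mul_of_nonneg_right ?_ hδpos.le
            rw [hCm]; linarith
        _ = ε := by
            rw [hδ]
            field_simp
  · -- the main weak-convergence statement
    intro f hfc hfb
    obtain ⟨Cf, hCf⟩ := hfb
    rw [← theta_subst a₀ b₀ hb₀ f hfc Cf hCf]
    -- monomial moments converge
    have hmono : ∀ m : ℕ, Tendsto (fun n => ∑ k ∈ Finset.range (n+1),
        σ n k * ∫ x, x^m * ((p (n-k) k).eval x * (p (n-k) k).eval x) ∂ (μ (n-k)))
        atTop (nhds (dd a₀ b₀ m 0)) := by
      intro m
      refine toeplitz σ hσ0 hσ1 hσ2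
        (fun n k => ∫ x, x^m * ((p (n-k) k).eval x * (p (n-k) k).eval x) ∂ (μ (n-k)))
        (dd a₀ b₀ m 0) (2*(3*K)^m) (fun n k hkn => ?_) (fun ε hε => ?_)
      · show |(∫ x, x^m * ((p (n-k) k).eval x * (p (n-k) k).eval x) ∂ (μ (n-k)))
            - dd a₀ b₀ m 0| ≤ 2*(3*K)^m
        rw [hmom (n-k) k m k]
        exact habs2 ((3*K)^m) _ _
          (cc_bound _ _ _ K (fun i => hcaK _ i) (fun i => hcbKabs _ i) m k)
          (dd_bound a₀ b₀ K haK hbK m 0)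
      · set Cm : ℝ := (m:ℝ) * (3*(K+1))^m + 1 with hCmdef
        have hCmpos : 0 < Cm := by positivity
        set δ : ℝ := ε / Cm with hδdef
        have hδpos : 0 < δ := by positivity
        obtain ⟨Na, hNa⟩ := hUa δ hδpos
        obtain ⟨Nb, hNb⟩ := hUb δ hδpos
        refine ⟨max Na Nb + m + 1, fun n k hk hkn => ?_⟩
        show |(∫ x, x^m * ((p (n-k) k).eval x * (p (n-k) k).eval x) ∂ (μ (n-k)))
            - dd a₀ b₀ m 0| ≤ ε
        rw [hmom (n-k) k m k]
        have hkm : m < k := by omega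
        have hnear : ∀ i, k - m ≤ i → |ca (n-k) i - a₀| ≤ δ ∧ |cb (n-k) i - b₀| ≤ δ := by
          intro i hi
          exact ⟨hNa i (by omega) (n-k), hNb i (by omega) (n-k)⟩
        have hest := cc_near_dd (ca (n-k)) (cb (n-k)) a₀ b₀ K δ k hK0 hδpos.le haK hbK
          (fun i => hcaK _ i) (fun i => hcbKabs _ i) (hb0 (n-k)) m hkm hnear m le_rfl k
        rw [sub_self] at hest
        refine le_trans hest ?_
        have h1 : δ * (m:ℝ) * (3*(K+1))^m ≤ δ * Cm := by
          rw [mul_assoc]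
          refine mul_le_mul_of_nonneg_left ?_ hδpos.le
          rw [hCmdef]; linarith
        refine le_trans h1 (le_of_eq ?_)
        rw [hδdef]
        field_simp
    -- the arcsine moment identity
    have hddint : ∀ m : ℕ, (∫ θ in (0:ℝ)..Real.pi, (a₀ + 2*b₀*Real.cos θ)^m)
        = Real.pi * dd a₀ b₀ m 0 := by
      intro m
      have h := w_int a₀ b₀ m 0
      simpa [Stmt2Aux.w] using h
    -- integrability of q·p² against μ
    have hqint : ∀ (j kk : ℕ) (q : Polynomial ℝ),
        MeasureTheory.Integrable (fun x => q.eval x * ((p j kk).eval x)^2) (μ j) := by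
      intro j kk q
      have := hpolyint j (q * (p j kk)^2)
      simpa [Polynomial.eval_mul, Polynomial.eval_pow] using this
    -- polynomial case
    have hpolylim : ∀ q : Polynomial ℝ, Tendsto (fun n => ∑ k ∈ Finset.range (n+1),
        σ n k * ∫ x, q.eval x * ((p (n-k) k).eval x)^2 ∂ (μ (n-k)))
        atTop (nhds ((1/Real.pi) * ∫ θ in (0:ℝ)..Real.pi,
          q.eval (a₀ + 2*b₀*Real.cos θ))) := by
      intro q
      induction q using Polynomial.induction_on' with
      | add q r hq hr =>
          have hsum : (fun n => ∑ k ∈ Finset.range (n+1), σ n k *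
              ∫ x, (q+r).eval x * ((p (n-k) k).eval x)^2 ∂ (μ (n-k)))
              = fun n => (∑ k ∈ Finset.range (n+1), σ n k *
                  ∫ x, q.eval x * ((p (n-k) k).eval x)^2 ∂ (μ (n-k)))
                + (∑ k ∈ Finset.range (n+1), σ n k *
                  ∫ x, r.eval x * ((p (n-k) k).eval x)^2 ∂ (μ (n-k))) := by
            funext n
            rw [← Finset.sum_add_distrib]
            refine Finset.sum_congr rfl (fun k hk => ?_)
            have hadd : (∫ x, (q+r).eval x * ((p (n-k) k).eval x)^2 ∂ (μ (n-k)))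
                = (∫ x, q.eval x * ((p (n-k) k).eval x)^2 ∂ (μ (n-k)))
                  + ∫ x, r.eval x * ((p (n-k) k).eval x)^2 ∂ (μ (n-k)) := by
              rw [← MeasureTheory.integral_add (hqint _ _ q) (hqint _ _ r)]
              refine MeasureTheory.integral_congr_ae (Filter.Eventually.of_forall (fun x => ?_))
              simp only [Polynomial.eval_add]
              ring
            rw [hadd]; ring
          rw [hsum]
          have hΛ : (1/Real.pi) * (∫ θ in (0:ℝ)..Real.pi, (q+r).eval (a₀ + 2*b₀*Real.cos θ))
              = ((1/Real.pi) * ∫ θ in (0:ℝ)..Real.pi, q.eval (a₀ + 2*b₀*Real.cos θ))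
                + ((1/Real.pi) * ∫ θ in (0:ℝ)..Real.pi, r.eval (a₀ + 2*b₀*Real.cos θ)) := by
            have hIq : IntervalIntegrable (fun θ : ℝ => q.eval (a₀ + 2*b₀*Real.cos θ))
                MeasureTheory.volume 0 Real.pi :=
              ((q.continuous.comp (by fun_prop : Continuous fun θ : ℝ =>
                a₀ + 2*b₀*Real.cos θ)).intervalIntegrable _ _)
            have hIr : IntervalIntegrable (fun θ : ℝ => r.eval (a₀ + 2*b₀*Real.cos θ))
                MeasureTheory.volume 0 Real.pi :=
              ((r.continuous.comp (by fun_prop : Continuous fun θ : ℝ =>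
                a₀ + 2*b₀*Real.cos θ)).intervalIntegrable _ _)
            rw [← mul_add, ← intervalIntegral.integral_add hIq hIr]
            congr 1
            refine intervalIntegral.integral_congr (fun θ _ => ?_)
            simp [Polynomial.eval_add]
          rw [hΛ]
          exact hq.add hr
      | monomial m c =>
          have hseq : (fun n => ∑ k ∈ Finset.range (n+1), σ n k *
              ∫ x, (Polynomial.monomial m c).eval x * ((p (n-k) k).eval x)^2 ∂ (μ (n-k)))
              = fun n => c * ∑ k ∈ Finset.range (n+1), σ n k *
                  ∫ x, x^m * ((p (n-k) k).eval x * (p (n-k) k).eval x) ∂ (μ (n-k)) := by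
            funext n
            rw [Finset.mul_sum]
            refine Finset.sum_congr rfl (fun k hk => ?_)
            have hmon : (∫ x, (Polynomial.monomial m c).eval x *
                ((p (n-k) k).eval x)^2 ∂ (μ (n-k)))
                = c * ∫ x, x^m * ((p (n-k) k).eval x * (p (n-k) k).eval x) ∂ (μ (n-k)) := by
              rw [← MeasureTheory.integral_const_mul]
              refine MeasureTheory.integral_congr_ae (Filter.Eventually.of_forall (fun x => ?_))
              simp only [Polynomial.eval_monomial]
              ring
            rw [hmon]; ring
          rw [hseq]
          have hΛ : (1/Real.pi) * (∫ θ in (0:ℝ)..Real.pi,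
              (Polynomial.monomial m c).eval (a₀ + 2*b₀*Real.cos θ))
              = c * dd a₀ b₀ m 0 := by
            have h1 : (∫ θ in (0:ℝ)..Real.pi,
                (Polynomial.monomial m c).eval (a₀ + 2*b₀*Real.cos θ))
                = c * ∫ θ in (0:ℝ)..Real.pi, (a₀ + 2*b₀*Real.cos θ)^m := by
              rw [← intervalIntegral.integral_const_mul]
              refine intervalIntegral.integral_congr (fun θ _ => ?_)
              simp [Polynomial.eval_monomial]
            rw [h1, hddint m]
            have hπ := Real.pi_ne_zero
            field_simp
          rw [hΛ]
          exact (hmono m).const_mul c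
    -- points of evaluation lie in [-K, K]
    have hptK : ∀ θ : ℝ, a₀ + 2*b₀*Real.cos θ ∈ Set.Icc (-K) K := by
      intro θ
      have h1 := Real.cos_le_one θ
      have h2 := Real.neg_one_le_cos θ
      have haddK : |a₀| + 2*b₀ ≤ K := le_max_right _ _
      have h4 := le_abs_self a₀
      have h5 := neg_abs_le a₀
      constructor
      · nlinarith
      · nlinarith
    have haeKIcc : ∀ j, ∀ᵐ x ∂(μ j), x ∈ Set.Icc (-K) K := by
      intro j
      refine (haeK j).mono (fun x hx => ?_)
      exact Set.mem_Icc.2 (abs_le.1 hx)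
    -- final epsilon argument
    rw [Metric.tendsto_atTop]
    intro ε hε
    obtain ⟨q, hq⟩ := exists_polynomial_near_of_continuousOn (-K) K f
      hfc.continuousOn (ε/4) (by linarith)
    have hqlim := hpolylim q
    rw [Metric.tendsto_atTop] at hqlim
    obtain ⟨N, hN⟩ := hqlim (ε/4) (by linarith)
    refine ⟨N, fun n hn => ?_⟩
    have h2 := hN n hn
    rw [Real.dist_eq] at h2 ⊢
    -- f·p² is integrable
    have hfint : ∀ j kk : ℕ, MeasureTheory.Integrable
        (fun x => f x * ((p j kk).eval x)^2) (μ j) := by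
      intro j kk
      obtain ⟨Ce, hCe⟩ := (isCompact_Icc : IsCompact (Set.Icc (-R) R)).exists_bound_of_continuousOn
        (((p j kk).continuous.pow 2).continuousOn)
      refine hintb j _ ((hfc.mul ((p j kk).continuous.pow 2)).measurable.aestronglyMeasurable)
        (Cf * |Ce|) (fun x hx => ?_)
      rw [abs_mul]
      refine mul_le_mul (hCf x) ?_ (abs_nonneg _) (le_trans (abs_nonneg _) (hCf 0))
      exact le_trans (by simpa using hCe x hx) (le_abs_self Ce)
    -- each k-term of the difference is small
    have hkey : ∀ j kk : ℕ,
        |(∫ x, f x * ((p j kk).eval x)^2 ∂(μ j))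
          - ∫ x, q.eval x * ((p j kk).eval x)^2 ∂(μ j)| ≤ ε/4 := by
      intro j kk
      rw [← MeasureTheory.integral_sub (hfint j kk) (hqint j kk q)]
      have h1 : |∫ x, (f x * ((p j kk).eval x)^2 - q.eval x * ((p j kk).eval x)^2) ∂(μ j)|
          ≤ ∫ x, |f x * ((p j kk).eval x)^2 - q.eval x * ((p j kk).eval x)^2| ∂(μ j) := by
        have h := MeasureTheory.norm_integral_le_integral_norm (μ := μ j)
          (f := fun x => f x * ((p j kk).eval x)^2 - q.eval x * ((p j kk).eval x)^2)
        simp only [Real.norm_eq_abs] at h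
        exact h
      refine le_trans h1 ?_
      have h2 : (∫ x, |f x * ((p j kk).eval x)^2 - q.eval x * ((p j kk).eval x)^2| ∂(μ j))
          ≤ ∫ x, (ε/4) * (x^0 * ((p j kk).eval x * (p j kk).eval x)) ∂(μ j) := by
        refine MeasureTheory.integral_mono_ae ((hfint j kk).sub (hqint j kk q)).abs
          ((hintm j 0 kk kk).const_mul (ε/4)) ?_
        refine (haeKIcc j).mono (fun x hx => ?_)
        show |f x * ((p j kk).eval x)^2 - q.eval x * ((p j kk).eval x)^2|
          ≤ (ε/4) * (x^0 * ((p j kk).eval x * (p j kk).eval x))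
        have hfq : |f x - q.eval x| ≤ ε/4 := by
          have := hq x hx
          rw [abs_sub_comm] at this
          linarith
        have hee : (0:ℝ) ≤ ((p j kk).eval x)^2 := sq_nonneg _
        calc |f x * ((p j kk).eval x)^2 - q.eval x * ((p j kk).eval x)^2|
            = |f x - q.eval x| * ((p j kk).eval x)^2 := by
              rw [← sub_mul, abs_mul, abs_of_nonneg hee]
          _ ≤ (ε/4) * ((p j kk).eval x)^2 :=
              mul_le_mul_of_nonneg_right hfq hee
          _ = (ε/4) * (x^0 * ((p j kk).eval x * (p j kk).eval x)) := by ring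
      refine le_trans h2 (le_of_eq ?_)
      rw [MeasureTheory.integral_const_mul, hmom j kk 0 kk]
      simp [Stmt2Aux.cc]
    -- the sums differ by at most ε/4
    have hterm1 : |(∑ k ∈ Finset.range (n+1), σ n k *
        ∫ x, f x * ((p (n-k) k).eval x)^2 ∂ (μ (n-k)))
        - ∑ k ∈ Finset.range (n+1), σ n k *
          ∫ x, q.eval x * ((p (n-k) k).eval x)^2 ∂ (μ (n-k))| ≤ ε/4 := by
      rw [← Finset.sum_sub_distrib]
      refine le_trans (Finset.abs_sum_le_sum_abs _ _) ?_
      have hstep : ∀ k ∈ Finset.range (n+1),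
          |σ n k * (∫ x, f x * ((p (n-k) k).eval x)^2 ∂ (μ (n-k)))
            - σ n k * ∫ x, q.eval x * ((p (n-k) k).eval x)^2 ∂ (μ (n-k))|
          ≤ σ n k * (ε/4) := by
        intro k hk
        have hkn : k ≤ n := by simp at hk; omega
        rw [← mul_sub, abs_mul, abs_of_nonneg (hσ0 n k hkn)]
        exact mul_le_mul_of_nonneg_left (hkey (n-k) k) (hσ0 n k hkn)
      refine le_trans (Finset.sum_le_sum hstep) ?_
      rw [← Finset.sum_mul, hσ1 n, one_mul]
    -- the theta integrals differ by at most ε/4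
    have hterm3 : |((1/Real.pi) * ∫ θ in (0:ℝ)..Real.pi, q.eval (a₀ + 2*b₀*Real.cos θ))
        - (1/Real.pi) * ∫ θ in (0:ℝ)..Real.pi, f (a₀ + 2*b₀*Real.cos θ)| ≤ ε/4 := by
      have hIq : IntervalIntegrable (fun θ : ℝ => q.eval (a₀ + 2*b₀*Real.cos θ))
          MeasureTheory.volume 0 Real.pi :=
        ((q.continuous.comp (by fun_prop : Continuous fun θ : ℝ =>
          a₀ + 2*b₀*Real.cos θ)).intervalIntegrable _ _)
      have hIf : IntervalIntegrable (fun θ : ℝ => f (a₀ + 2*b₀*Real.cos θ))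
          MeasureTheory.volume 0 Real.pi :=
        ((hfc.comp (by fun_prop : Continuous fun θ : ℝ =>
          a₀ + 2*b₀*Real.cos θ)).intervalIntegrable _ _)
      rw [← mul_sub, ← intervalIntegral.integral_sub hIq hIf]
      rw [abs_mul]
      have hbound := intervalIntegral.norm_integral_le_of_norm_le_const
        (C := ε/4) (f := fun θ => q.eval (a₀ + 2*b₀*Real.cos θ) - f (a₀ + 2*b₀*Real.cos θ))
        (a := 0) (b := Real.pi) (fun θ _ => by
          rw [Real.norm_eq_abs]
          exact le_of_lt (hq _ (hptK θ)))
      rw [Real.norm_eq_abs] at hbound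
      have hπpos := Real.pi_pos
      calc |1/Real.pi| * |∫ θ in (0:ℝ)..Real.pi,
            (q.eval (a₀ + 2*b₀*Real.cos θ) - f (a₀ + 2*b₀*Real.cos θ))|
          ≤ |1/Real.pi| * (ε/4 * |Real.pi - 0|) :=
            mul_le_mul_of_nonneg_left hbound (abs_nonneg _)
        _ = ε/4 := by
            rw [sub_zero, abs_of_pos hπpos, abs_of_pos (by positivity : (0:ℝ) < 1/Real.pi)]
            field_simp
    have htri := abs_sub_le
      (∑ k ∈ Finset.range (n+1), σ n k *
        ∫ x, f x * ((p (n-k) k).eval x)^2 ∂ (μ (n-k)))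
      (∑ k ∈ Finset.range (n+1), σ n k *
        ∫ x, q.eval x * ((p (n-k) k).eval x)^2 ∂ (μ (n-k)))
      ((1/Real.pi) * ∫ θ in (0:ℝ)..Real.pi, f (a₀ + 2*b₀*Real.cos θ))
    have htri2 := abs_sub_le
      (∑ k ∈ Finset.range (n+1), σ n k *
        ∫ x, q.eval x * ((p (n-k) k).eval x)^2 ∂ (μ (n-k)))
      ((1/Real.pi) * ∫ θ in (0:ℝ)..Real.pi, q.eval (a₀ + 2*b₀*Real.cos θ))
      ((1/Real.pi) * ∫ θ in (0:ℝ)..Real.pi, f (a₀ + 2*b₀*Real.cos θ))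
    linarith
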